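/- Let d ≥ 2. For every t ∈ F_{3^{2d}} \ {0} there exist x, y, z ∈ F_{3^{2d}} with x^{3^d+1} = y^{3^d+1} = z^{3^d+1} = 1 and x + y + z = t. -/
import Mathlib

open Finset Polynomial

/-- A quadratic over a field has at most two roots: helper form. -/
private lemma quad_roots3 {F : Type*} [Field F] {A B w1 w2 w3 : F}
    (e1 : w1 ^ 2 - A * w1 + B = 0) (e2 : w2 ^ 2 - A * w2 + B = 0)
    (e3 : w3 ^ 2 - A * w3 + B = 0) (h12 : w1 ≠ w2) (h13 : w1 ≠ w3) : w2 = w3 := by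
  have p2 : w1 + w2 = A := by
    have hfac : (w1 - w2) * (w1 + w2 - A) = 0 := by linear_combination e1 - e2
    rcases mul_eq_zero.mp hfac with h | h
    · exact absurd (sub_eq_zero.mp h) h12
    · linear_combination h
  have p3 : w1 + w3 = A := by
    have hfac : (w1 - w3) * (w1 + w3 - A) = 0 := by linear_combination e1 - e3
    rcases mul_eq_zero.mp hfac with h | h
    · exact absurd (sub_eq_zero.mp h) h13
    · linear_combination h
  linear_combination p2 - p3

/-- If all elements of `T` scaled by `c ≠ 0` satisfy a fixed monic quadratic,
then `T` has at most two elements. -/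
private lemma card_le_two_of_quad {F : Type*} [Field F] [DecidableEq F] {T : Finset F}
    {c A B : F} (hc : c ≠ 0)
    (hq : ∀ z ∈ T, (c * z) ^ 2 - A * (c * z) + B = 0) : T.card ≤ 2 := by
  by_contra hlt
  push_neg at hlt
  obtain ⟨u, huT, hu3⟩ := Finset.exists_subset_card_eq (by omega : 3 ≤ T.card)
  obtain ⟨z1, z2, z3, h12, h13, h23, rfl⟩ := Finset.card_eq_three.mp hu3
  have m1 : z1 ∈ T := huT (by simp)
  have m2 : z2 ∈ T := huT (by simp)
  have m3 : z3 ∈ T := huT (by simp)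
  have w12 : c * z1 ≠ c * z2 := fun hE => h12 (mul_left_cancel₀ hc hE)
  have w13 : c * z1 ≠ c * z3 := fun hE => h13 (mul_left_cancel₀ hc hE)
  have := quad_roots3 (hq z1 m1) (hq z2 m2) (hq z3 m3) w12 w13
  exact h23 (mul_left_cancel₀ hc this)

/-- In a finite field, the number of `n`-th roots of unity is `n` when `n ∣ #Fˣ`. -/
private lemma card_pow_eq_one_eq (F : Type*) [Field F] [Fintype F] [DecidableEq F] {n : ℕ}
    (hn : 0 < n) (hdvd : n ∣ Fintype.card F - 1) :
    (Finset.univ.filter fun x : F => x ^ n = 1).card = n := by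
  have hub : (Finset.univ.filter fun x : F => x ^ n = 1).card ≤ n := by
    classical
    have hsub : (Finset.univ.filter fun x : F => x ^ n = 1) ⊆ (nthRoots n (1 : F)).toFinset := by
      intro x hx
      rw [Multiset.mem_toFinset, Polynomial.mem_nthRoots hn]
      exact (Finset.mem_filter.mp hx).2
    calc (Finset.univ.filter fun x : F => x ^ n = 1).card
        ≤ (nthRoots n (1 : F)).toFinset.card := Finset.card_le_card hsub
      _ ≤ Multiset.card (nthRoots n (1 : F)) := Multiset.toFinset_card_le _
      _ ≤ n := Polynomial.card_nthRoots n 1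
  have hlb : n ≤ (Finset.univ.filter fun x : F => x ^ n = 1).card := by
    obtain ⟨g, hg⟩ := IsCyclic.exists_generator (α := Fˣ)
    have hog : orderOf g = Fintype.card F - 1 := by
      rw [orderOf_eq_card_of_forall_mem_zpowers hg, Nat.card_eq_fintype_card, Fintype.card_units]
    have hm0 : 0 < Fintype.card F - 1 := by
      rw [← Fintype.card_units (α := F)]; exact Fintype.card_pos
    set m := Fintype.card F - 1 with hm
    set u : Fˣ := g ^ (m / n) with hu
    have hord : orderOf u = n := by
      rw [hu, orderOf_pow, hog, Nat.gcd_eq_right (Nat.div_dvd_of_dvd hdvd),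
        Nat.div_div_self hdvd hm0.ne']
    have hmaps : ∀ i ∈ Finset.range n, ((u ^ i : Fˣ) : F) ∈
        (Finset.univ.filter fun x : F => x ^ n = 1) := by
      intro i _
      rw [Finset.mem_filter]
      refine ⟨Finset.mem_univ _, ?_⟩
      have : ((u ^ i) ^ n : Fˣ) = 1 := by
        rw [← pow_mul, mul_comm, pow_mul, ← hord, pow_orderOf_eq_one, one_pow]
      calc ((u ^ i : Fˣ) : F) ^ n = (((u ^ i) ^ n : Fˣ) : F) := by push_cast; ring
        _ = 1 := by rw [this]; rfl
    have hinj : Set.InjOn (fun i => ((u ^ i : Fˣ) : F)) (Finset.range n) := by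
      intro i hi j hj hij
      have : (u ^ i : Fˣ) = u ^ j := Units.ext hij
      have := pow_injOn_Iio_orderOf (by simpa [hord] using Finset.mem_range.mp hi)
        (by simpa [hord] using Finset.mem_range.mp hj) this
      exact this
    calc n = (Finset.range n).card := (Finset.card_range n).symm
      _ ≤ _ := Finset.card_le_card_of_injOn _ hmaps hinj
  omega

/-- every nonzero element of F_{3^{2d}} is a sum of three norm-one elements. -/
theorem stmt8 (d : ℕ) (hd : 2 ≤ d) (F : Type) [Field F] [Fintype F]
    (hcard : Fintype.card F = 3 ^ (2 * d)) :
    ∀ t : F, t ≠ 0 → ∃ x y z : F,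
      x ^ (3 ^ d + 1) = 1 ∧ y ^ (3 ^ d + 1) = 1 ∧ z ^ (3 ^ d + 1) = 1 ∧
      x + y + z = t := by
  classical
  intro t ht
  set q : ℕ := 3 ^ d with hqdef
  -- basic numerics
  have hq3 : 3 ≤ q := by
    calc 3 = 3 ^ 1 := (pow_one 3).symm
    _ ≤ 3 ^ d := Nat.pow_le_pow_right (by norm_num) (by omega)
  have hqodd : Odd q := Odd.pow ⟨1, by norm_num⟩
  have hcard' : Fintype.card F = q * q := by
    rw [hcard, two_mul, pow_add]
  -- characteristic 3
  obtain ⟨p, hp⟩ := CharP.exists F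
  haveI := hp
  have hpp : p.Prime := CharP.char_is_prime F p
  obtain ⟨n, hpn, hcard2⟩ := FiniteField.card F p
  have hp3 : p = 3 := by
    have h1 : p ∣ 3 ^ (2 * d) := by
      rw [← hcard, hcard2]
      exact dvd_pow_self p (by positivity)
    have := hpp.dvd_of_dvd_pow h1
    exact (Nat.prime_dvd_prime_iff_eq hpp (by norm_num)).mp this
  subst hp3
  haveI : Fact (Nat.Prime 3) := ⟨by norm_num⟩
  -- Frobenius facts
  have hfrob : ∀ a b : F, (a + b) ^ q = a ^ q + b ^ q := fun a b => add_pow_char_pow a b 3 d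
  have hqq : ∀ a : F, (a ^ q) ^ q = a := by
    intro a
    rw [← pow_mul, ← hcard', FiniteField.pow_card]
  have hsubpow : ∀ a b : F, (a - b) ^ q = a ^ q - b ^ q := by
    intro a b
    rw [sub_eq_add_neg, hfrob, Odd.neg_pow hqodd, sub_eq_add_neg]
  -- trivial case: N t = 1
  by_cases hN : t ^ (q + 1) = 1
  · refine ⟨t, 1, -1, hN, one_pow _, ?_, by ring⟩
    rw [Even.neg_one_pow hqodd.add_one]
  -- main case
  have hm0 : t ^ (q + 1) ≠ 0 := pow_ne_zero _ ht
  set m : F := t ^ (q + 1) with hmdef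
  -- the finsets
  set Fq : Finset F := Finset.univ.filter (fun u : F => u ^ q = u) with hFq
  set S : Finset F := Finset.univ.filter (fun x : F => x ^ (q + 1) = 1) with hS
  set g : F → F := fun z => (t - z) ^ (q + 1) with hg
  set h : F → F := fun s => (1 + s) ^ (q + 1) with hh
  -- divisibilities
  obtain ⟨k, hk⟩ : ∃ k, q = k + 1 := ⟨q - 1, by omega⟩
  have hqsq : q * q - 1 = (k + 2) * k := by
    have : q * q = (k + 2) * k + 1 := by rw [hk]; ring
    omega
  have hdvd1 : q + 1 ∣ Fintype.card F - 1 := by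
    rw [hcard', hqsq, hk]
    exact Dvd.intro k rfl
  have hdvd2 : q - 1 ∣ Fintype.card F - 1 := by
    rw [hcard', hqsq]
    have : q - 1 = k := by omega
    rw [this]
    exact Dvd.intro_left (k + 2) rfl
  -- cardinalities
  have hScard : S.card = q + 1 := card_pow_eq_one_eq F (by omega) hdvd1
  have hFqcard : Fq.card = q := by
    have hseteq : Fq = insert (0 : F)
        (Finset.univ.filter fun u : F => u ^ (q - 1) = 1) := by
      ext u
      simp only [hFq, Finset.mem_filter, Finset.mem_univ, true_and, Finset.mem_insert]
      constructor
      · intro huq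
        by_cases hu : u = 0
        · exact Or.inl hu
        · right
          have hqe : q - 1 + 1 = q := by omega
          have : u ^ (q - 1) * u = 1 * u := by
            rw [← pow_succ, hqe, huq, one_mul]
          exact mul_right_cancel₀ hu this
      · rintro (rfl | hu1)
        · rw [zero_pow (by omega)]
        · have hqe : q - 1 + 1 = q := by omega
          rw [← hqe, pow_succ, hu1, one_mul]
    rw [hseteq, Finset.card_insert_of_notMem, card_pow_eq_one_eq F (by omega) hdvd2]
    · omega
    · simp only [Finset.mem_filter, Finset.mem_univ, true_and]
      rw [zero_pow (by omega)]
      exact fun h0 => one_ne_zero h0.symm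
  -- norms land in Fq
  have hnormFq : ∀ u : F, u ^ (q + 1) ∈ Fq := by
    intro u
    simp only [hFq, Finset.mem_filter, Finset.mem_univ, true_and]
    calc (u ^ (q + 1)) ^ q = ((u ^ q) * u) ^ q := by rw [← pow_succ]
      _ = ((u ^ q) ^ q) * u ^ q := by rw [mul_pow]
      _ = u * u ^ q := by rw [hqq]
      _ = u ^ (q + 1) := by rw [mul_comm, pow_succ]
  -- trace identity for g on S
  have hgid : ∀ z ∈ S, g z = m + 1 - ((t ^ q * z) + (t ^ q * z) ^ q) := by
    intro z hz
    have hz1 : z ^ (q + 1) = 1 := (Finset.mem_filter.mp hz).2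
    have hz' : z ^ q * z = 1 := by rw [← pow_succ]; exact hz1
    have hw : (t ^ q * z) ^ q = t * z ^ q := by rw [mul_pow, hqq]
    have e1 : g z = (t ^ q - z ^ q) * (t - z) := by
      rw [hg]; simp only []
      rw [pow_succ, hsubpow, mul_comm]
    rw [e1, hw, hmdef]
    have hts : t ^ (q + 1) = t ^ q * t := by rw [pow_succ]
    linear_combination hz' - hts
  -- trace identity for h on S
  have hhid : ∀ s ∈ S, h s = 2 + (s + s ^ q) := by
    intro s hs
    have hs1 : s ^ (q + 1) = 1 := (Finset.mem_filter.mp hs).2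
    have hs' : s ^ q * s = 1 := by rw [← pow_succ]; exact hs1
    have e1 : h s = (1 + s ^ q) * (1 + s) := by
      rw [hh]; simp only []
      rw [pow_succ, hfrob, one_pow, mul_comm]
    rw [e1]
    linear_combination hs'
  -- fibers of g on S have ≤ 2 elements
  have hgfib : ∀ v ∈ S.image g, (S.filter fun z => g z = v).card ≤ 2 := by
    intro v _
    have htq : (t ^ q : F) ≠ 0 := pow_ne_zero _ ht
    apply card_le_two_of_quad (A := m + 1 - v) (B := m) htq
    intro z hz'
    obtain ⟨hzS, hgz⟩ := Finset.mem_filter.mp hz'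
    have hz1 : z ^ (q + 1) = 1 := (Finset.mem_filter.mp hzS).2
    have hz'' : z ^ q * z = 1 := by rw [← pow_succ]; exact hz1
    have hwn : (t ^ q * z) ^ q * (t ^ q * z) = m := by
      rw [mul_pow, hqq]
      have : t * z ^ q * (t ^ q * z) = (t ^ q * t) * (z ^ q * z) := by ring
      rw [this, hz'', mul_one, hmdef, pow_succ]
    have htr : (t ^ q * z) + (t ^ q * z) ^ q = m + 1 - v := by
      have := hgid z hzS
      rw [hgz] at this
      linear_combination this
    have key : ∀ w wq : F, wq * w = m → w + wq = m + 1 - v →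
        w ^ 2 - (m + 1 - v) * w + m = 0 := by
      intro w wq h1 h2
      linear_combination w * h2 - h1
    exact key _ _ hwn htr
  -- fibers of h on S have ≤ 2 elements
  have hhfib : ∀ v ∈ S.image h, (S.filter fun s => h s = v).card ≤ 2 := by
    intro v _
    apply card_le_two_of_quad (c := (1 : F)) (A := v - 2) (B := 1) one_ne_zero
    intro s hs'
    obtain ⟨hsS, hhs⟩ := Finset.mem_filter.mp hs'
    have hs1 : s ^ (q + 1) = 1 := (Finset.mem_filter.mp hsS).2
    have hs'' : s ^ q * s = 1 := by rw [← pow_succ]; exact hs1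
    have htr : s + s ^ q = v - 2 := by
      have := hhid s hsS
      rw [hhs] at this
      linear_combination -this
    have key : ∀ w wq : F, wq * w = 1 → w + wq = v - 2 →
        (1 * w) ^ 2 - (v - 2) * (1 * w) + 1 = 0 := by
      intro w wq h1 h2
      linear_combination w * h2 - h1
    exact key _ _ hs'' htr
  -- pigeonhole
  have himgG : S.card ≤ 2 * (S.image g).card := Finset.card_le_mul_card_image S 2 hgfib
  have himgH : S.card ≤ 2 * (S.image h).card := Finset.card_le_mul_card_image S 2 hhfib
  have hsubG : S.image g ⊆ Fq := by
    intro v hv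
    obtain ⟨z, _, rfl⟩ := Finset.mem_image.mp hv
    exact hnormFq _
  have hsubH : S.image h ⊆ Fq := by
    intro v hv
    obtain ⟨s, _, rfl⟩ := Finset.mem_image.mp hv
    exact hnormFq _
  have hunion : ((S.image g) ∪ (S.image h)).card ≤ q := by
    rw [← hFqcard]
    exact Finset.card_le_card (Finset.union_subset hsubG hsubH)
  have hinter : 0 < ((S.image g) ∩ (S.image h)).card := by
    have h1 := Finset.card_inter_add_card_union (S.image g) (S.image h)
    omega
  obtain ⟨c, hc⟩ := Finset.card_pos.mp hinter
  obtain ⟨hcG, hcH⟩ := Finset.mem_inter.mp hc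
  obtain ⟨z, hzS, hgz⟩ := Finset.mem_image.mp hcG
  obtain ⟨s, hsS, hhs⟩ := Finset.mem_image.mp hcH
  have hz1 : z ^ (q + 1) = 1 := (Finset.mem_filter.mp hzS).2
  have hs1 : s ^ (q + 1) = 1 := (Finset.mem_filter.mp hsS).2
  -- c ≠ 0
  have hc0 : c ≠ 0 := by
    intro h0
    rw [h0] at hgz
    have : t - z = 0 := by
      have := pow_eq_zero_iff (n := q + 1) (by omega) |>.mp hgz
      exact this
    have htz : t = z := by linear_combination this
    have h1 : t ^ (q + 1) = 1 := by rw [htz]; exact hz1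
    exact hN h1
  have h1s : (1 : F) + s ≠ 0 := by
    intro h0
    rw [← hhs, hh] at hc0
    simp only [] at hc0
    rw [h0, zero_pow (by omega)] at hc0
    exact hc0 rfl
  -- construct the solution
  refine ⟨(t - z) * s * (1 + s)⁻¹, (t - z) * (1 + s)⁻¹, z, ?_, ?_, hz1, ?_⟩
  · rw [mul_pow, mul_pow, inv_pow]
    have hgz' : (t - z) ^ (q + 1) = c := hgz
    have hhs' : (1 + s) ^ (q + 1) = c := hhs
    rw [hgz', hs1, hhs', mul_one, mul_inv_cancel₀ hc0]
  · rw [mul_pow, inv_pow]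
    have hgz' : (t - z) ^ (q + 1) = c := hgz
    have hhs' : (1 + s) ^ (q + 1) = c := hhs
    rw [hgz', hhs', mul_inv_cancel₀ hc0]
  · field_simp
    ring
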